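/- Matrix Tree Theorem for directed weighted graphs: let G be a finite directed graph on n vertices with nonnegative edge weights, and let L be the n×n matrix with L_{v,w} = −(weight of edge from v to w) for v ≠ w and L_{v,v} = sum of the weights of edges leaving v. Then for any vertex r, the determinant of the matrix obtained from L by deleting row r and column r equals the sum of the weights of the arborescences of G rooted at r. -/

import Mathlib

attribute [local instance] Classical.propDecidable

/-- The (negative) Laplacian of a finite weighted directed multigraph:
`L v v = ` sum of the weights of the edges leaving `v`, and for `v ≠ v'`,
`L v v' = -(total weight of the edges from v to v')`. -/
noncomputable def dirLaplacian {V E : Type} [Fintype V] [Fintype E]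
    (tail head : E → V) (w : E → ℝ) : Matrix V V ℝ :=
  fun i j =>
    if i = j then ∑ e ∈ Finset.univ.filter (fun e => tail e = i), w e
    else -(∑ e ∈ Finset.univ.filter (fun e => tail e = i ∧ head e = j), w e)

open Finset Matrix

/-- The 0/±1 matrix attached to a choice of outgoing edge for each non-root vertex. -/
noncomputable def arbMat {V E : Type} [Fintype V] (head : E → V) (r : V)
    (p : {v : V // v ≠ r} → E) : Matrix {v : V // v ≠ r} {v : V // v ≠ r} ℝ :=
  Matrix.of fun v j => (if v = j then (1:ℝ) else 0) - (if head (p v) = j.1 then 1 else 0)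

lemma arbMat_det_one {V E : Type} [Fintype V] (head : E → V) (r : V)
    (p : {v : V // v ≠ r} → E)
    (hd : ∀ v : {v : V // v ≠ r}, head (p v) ≠ v.1)
    (hr : ∀ v : V, Relation.ReflTransGen
      (fun a b => ∃ h : a ≠ r, head (p ⟨a, h⟩) = b) v r) :
    (arbMat head r p).det = 1 := by
  classical
  set τ : V → V := fun v => if h : v ≠ r then head (p ⟨v, h⟩) else r with hτ
  have hreach : ∀ v : V, ∃ k, τ^[k] v = r := by
    intro v
    induction hr v using Relation.ReflTransGen.head_induction_on with
    | refl => exact ⟨0, rfl⟩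
    | @head a c h' _ ih =>
        obtain ⟨k, hk⟩ := ih
        obtain ⟨ha, hb⟩ := h'
        refine ⟨k + 1, ?_⟩
        rw [Function.iterate_succ_apply]
        have hta : τ a = c := by simp only [hτ, dif_pos ha]; exact hb
        rw [hta, hk]
  set d : V → ℕ := fun v => Nat.find (hreach v) with hdd
  have hspec : ∀ v, τ^[d v] v = r := fun v => Nat.find_spec (hreach v)
  have hdpos : ∀ v, v ≠ r → 0 < d v := by
    intro v hv
    rcases Nat.eq_zero_or_pos (d v) with h0 | h0
    · exact absurd (by simpa [h0] using hspec v) hv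
    · exact h0
  have hτv : ∀ v : {v : V // v ≠ r}, τ v.1 = head (p v) := by
    intro v; simp only [hτ, dif_pos v.2]
  have hstep : ∀ v : V, v ≠ r → d (τ v) < d v := by
    intro v hv
    have h1 : τ^[d v - 1] (τ v) = r := by
      rw [← Function.iterate_succ_apply, show (d v - 1).succ = d v by
        have := hdpos v hv; omega]
      exact hspec v
    have := Nat.find_min' (hreach (τ v)) h1
    calc d (τ v) ≤ d v - 1 := this
      _ < d v := Nat.sub_lt (hdpos v hv) one_pos
  set b : {v : V // v ≠ r} → ℕ := fun v => d v.1 with hb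
  have hBT : ((arbMat head r p)ᵀ).BlockTriangular b := by
    intro i j hij
    show arbMat head r p j i = 0
    have hji : j ≠ i := fun h => by subst h; exact lt_irrefl _ hij
    have hhd : head (p j) ≠ i.1 := by
      intro h
      have := hstep j.1 j.2
      rw [hτv j, h] at this
      exact absurd hij (not_lt.mpr (le_of_lt this))
    simp [arbMat, hji, hhd]
  have hblock : ∀ a ∈ Finset.univ.image b,
      (((arbMat head r p)ᵀ).toSquareBlock b a).det = 1 := by
    intro a _
    have : ((arbMat head r p)ᵀ).toSquareBlock b a = 1 := by
      ext i j
      by_cases hij : i = j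
      · subst hij
        have : head (p i.1) ≠ i.1.1 := hd i.1
        simp [Matrix.toSquareBlock_def, arbMat, Matrix.one_apply_eq, this]
      · have hne : i.1 ≠ j.1 := fun h => hij (Subtype.ext h)
        have hhd : head (p j.1) ≠ i.1.1 := by
          intro h
          have := hstep j.1.1 j.1.2
          rw [hτv j.1, h] at this
          have hbi : d i.1.1 = a := i.2
          have hbj : d j.1.1 = a := j.2
          rw [hbi, hbj] at this
          exact lt_irrefl _ this
        simp [Matrix.toSquareBlock_def, arbMat, Matrix.one_apply_ne hij, hne.symm, hhd]
    rw [this, Matrix.det_one]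
  rw [← Matrix.det_transpose, hBT.det, Finset.prod_congr rfl hblock, Finset.prod_const_one]

lemma arbMat_det_zero {V E : Type} [Fintype V] (head : E → V) (r : V)
    (p : {v : V // v ≠ r} → E)
    (hnr : ¬ ∀ v : V, Relation.ReflTransGen
      (fun a b => ∃ h : a ≠ r, head (p ⟨a, h⟩) = b) v r) :
    (arbMat head r p).det = 0 := by
  classical
  set rel : V → V → Prop := fun a b => ∃ h : a ≠ r, head (p ⟨a, h⟩) = b with hrel
  push_neg at hnr
  obtain ⟨v0, hv0⟩ := hnr
  -- the set of vertices not reaching r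
  have hne : ∀ s : {v : V // ¬ Relation.ReflTransGen rel v r}, s.1 ≠ r := by
    intro s h
    exact s.2 (by rw [h])
  set S := {v : V // ¬ Relation.ReflTransGen rel v r} with hS
  set g : S → S := fun s => ⟨head (p ⟨s.1, hne s⟩), by
    intro h
    exact s.2 (Relation.ReflTransGen.head ⟨hne s, rfl⟩ h)⟩ with hg
  set s0 : S := ⟨v0, hv0⟩ with hs0
  -- pigeonhole to find a periodic point
  have key : ∃ m n : ℕ, m < n ∧ g^[m] s0 = g^[n] s0 := by
    obtain ⟨m, n, hmn, he⟩ :=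
      Finite.exists_ne_map_eq_of_infinite (fun k : ℕ => g^[k] s0)
    rcases hmn.lt_or_gt with h | h
    · exact ⟨m, n, h, he⟩
    · exact ⟨n, m, h, he.symm⟩
  obtain ⟨m, n, hmn, he⟩ := key
  set y : S := g^[m] s0 with hy
  set q : ℕ := n - m with hq
  have hqpos : 0 < q := Nat.sub_pos_of_lt hmn
  have hper : g^[q] y = y := by
    rw [hy, ← Function.iterate_add_apply, hq, Nat.sub_add_cancel hmn.le, ← he]
  set C : Finset S := (Finset.range q).image (fun k => g^[k] y) with hC
  have hyC : y ∈ C := by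
    refine Finset.mem_image.mpr ⟨0, Finset.mem_range.mpr hqpos, rfl⟩
  have hperC : ∀ s ∈ C, g^[q] s = s := by
    intro s hs
    obtain ⟨k, _, rfl⟩ := Finset.mem_image.mp hs
    rw [← Function.iterate_add_apply, Nat.add_comm, Function.iterate_add_apply, hper]
  have hgC : ∀ s ∈ C, g s ∈ C := by
    intro s hs
    obtain ⟨k, hk, rfl⟩ := Finset.mem_image.mp hs
    rw [Finset.mem_range] at hk
    have : g (g^[k] y) = g^[k+1] y := (Function.iterate_succ_apply' g k y).symm
    rw [this]
    rcases Nat.lt_or_ge (k+1) q with h | h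
    · exact Finset.mem_image.mpr ⟨k+1, Finset.mem_range.mpr h, rfl⟩
    · have hkq : k + 1 = q := le_antisymm hk h
      rw [hkq, hper]; exact hyC
  have hinj : ∀ a ∈ C, ∀ b ∈ C, g a = g b → a = b := by
    intro a ha b hb hab
    have h1 : g^[q-1] (g a) = a := by
      rw [← Function.iterate_succ_apply, show (q-1).succ = q by omega, hperC a ha]
    have h2 : g^[q-1] (g b) = b := by
      rw [← Function.iterate_succ_apply, show (q-1).succ = q by omega, hperC b hb]
    rw [← h1, ← h2, hab]
  have himg : C.image g = C := by
    apply Finset.eq_of_subset_of_card_le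
    · intro s hs
      obtain ⟨a, ha, rfl⟩ := Finset.mem_image.mp hs
      exact hgC a ha
    · rw [Finset.card_image_of_injOn hinj]
  -- indicator vector
  set ι : S → {v : V // v ≠ r} := fun s => ⟨s.1, hne s⟩ with hι
  have hιinj : Function.Injective ι := by
    intro a b hab
    exact Subtype.ext (congrArg (fun t : {v : V // v ≠ r} => t.1) hab)
  set Cr : Finset {v : V // v ≠ r} := C.image ι with hCr
  have hxM : (fun v => if v ∈ Cr then (1:ℝ) else 0) ᵥ* (arbMat head r p) = 0 := by
    funext j
    show (∑ v, (if v ∈ Cr then (1:ℝ) else 0) * arbMat head r p v j) = 0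
    have e1 : ∀ v, (if v ∈ Cr then (1:ℝ) else 0) * arbMat head r p v j
        = if v ∈ Cr then arbMat head r p v j else 0 := fun v => by
      by_cases h : v ∈ Cr <;> simp [h]
    rw [Finset.sum_congr rfl fun v _ => e1 v, Finset.sum_ite_mem, Finset.univ_inter]
    have step2 : (∑ v ∈ Cr, arbMat head r p v j)
        = (∑ v ∈ Cr, (if v = j then (1:ℝ) else 0))
          - ∑ v ∈ Cr, (if head (p v) = j.1 then (1:ℝ) else 0) := by
      rw [← Finset.sum_sub_distrib]; rfl
    rw [step2]
    have hcongr : ∀ s ∈ C, (if head (p (ι s)) = j.1 then (1:ℝ) else 0)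
        = (if ι (g s) = j then (1:ℝ) else 0) := by
      intro s _
      congr 1
      simp only [eq_iff_iff]
      constructor
      · intro h; exact Subtype.ext h
      · intro h; exact congrArg (fun t : {v : V // v ≠ r} => t.1) h
    have step3 : (∑ v ∈ Cr, (if head (p v) = j.1 then (1:ℝ) else 0))
        = ∑ v ∈ Cr, (if v = j then (1:ℝ) else 0) := by
      rw [hCr, Finset.sum_image (fun a _ b _ h => hιinj h),
          Finset.sum_image (fun a _ b _ h => hιinj h)]
      calc ∑ s ∈ C, (if head (p (ι s)) = j.1 then (1:ℝ) else 0)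
          = ∑ s ∈ C, (if ι (g s) = j then (1:ℝ) else 0) :=
            Finset.sum_congr rfl hcongr
        _ = ∑ v ∈ C.image g, (if ι v = j then (1:ℝ) else 0) :=
            (Finset.sum_image (f := fun v => if ι v = j then (1:ℝ) else 0) (g := g) hinj).symm
        _ = ∑ s ∈ C, (if ι s = j then (1:ℝ) else 0) := by rw [himg]
    rw [step3, sub_self]
  have hx0 : (fun v => if v ∈ Cr then (1:ℝ) else 0) ≠ 0 := by
    intro h
    have h1 : (fun v => if v ∈ Cr then (1:ℝ) else 0) (ι y) = 1 := by
      exact if_pos (Finset.mem_image_of_mem ι hyC)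
    rw [h] at h1
    simp at h1
  exact Matrix.exists_vecMul_eq_zero_iff.mp ⟨_, hx0, hxM⟩




/-- Matrix Tree Theorem for directed weighted graphs.  Let `G`
be a finite directed graph (no self-loops) with nonnegative edge weights and
Laplacian matrix `L` as above.  For any vertex `r`, the determinant of the matrix
obtained from `L` by deleting row `r` and column `r` equals the sum of the weights
of the arborescences of `G` rooted at `r` (an arborescence rooted at `r` gives every
vertex `v ≠ r` exactly one outgoing edge, and from every vertex the resulting path
reaches `r`; its weight is the product of the weights of its edges). -/
theorem stmt19 {V E : Type} [Fintype V] [Fintype E]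
    (tail head : E → V) (w : E → ℝ) (hw : ∀ e, 0 ≤ w e)
    (hloop : ∀ e, tail e ≠ head e) (r : V) :
    ((dirLaplacian tail head w).submatrix
        (Subtype.val : {v : V // v ≠ r} → V)
        (Subtype.val : {v : V // v ≠ r} → V)).det
    = ∑ T : {p : {v : V // v ≠ r} → E //
        (∀ v, tail (p v) = v.1) ∧
        ∀ v : V, Relation.ReflTransGen
          (fun a b => ∃ h : a ≠ r, head (p ⟨a, h⟩) = b) v r},
      ∏ v : {v : V // v ≠ r}, w (T.1 v) := by
  classical
  set Vr := {v : V // v ≠ r} with hVr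
  set c : Vr → E → ℝ := fun v e => if tail e = v.1 then w e else 0 with hc
  set u : Vr → E → (Vr → ℝ) := fun v e j =>
    (if v = j then (1:ℝ) else 0) - (if head e = j.1 then 1 else 0) with hu
  set Q : (Vr → E) → Prop := fun p =>
    (∀ v, tail (p v) = v.1) ∧
    ∀ v : V, Relation.ReflTransGen
      (fun a b => ∃ h : a ≠ r, head (p ⟨a, h⟩) = b) v r with hQ
  -- Step 1: each row of the reduced Laplacian is a weighted sum of elementary rows
  have hrow : ((dirLaplacian tail head w).submatrix
      (Subtype.val : Vr → V) (Subtype.val : Vr → V))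
      = Matrix.of (fun v : Vr => ∑ e : E, c v e • u v e) := by
    ext v j
    have hsum : (∑ e : E, c v e • u v e) j = ∑ e : E, c v e * u v e j := by
      rw [Finset.sum_apply]; rfl
    show dirLaplacian tail head w v.1 j.1 = _
    rw [Matrix.of_apply, hsum]
    by_cases hvj : v = j
    · subst hvj
      rw [dirLaplacian, if_pos rfl]
      have : ∀ e : E, c v e * u v e v = if tail e = v.1 then w e else 0 := by
        intro e
        by_cases ht : tail e = v.1
        · have hh : head e ≠ v.1 := by rw [← ht]; exact (hloop e).symm
          simp [hc, hu, ht, hh]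
        · simp [hc, ht]
      rw [Finset.sum_congr rfl fun e _ => this e, Finset.sum_filter]
    · have hvj' : v.1 ≠ j.1 := fun h => hvj (Subtype.ext h)
      rw [dirLaplacian, if_neg hvj']
      have : ∀ e : E, c v e * u v e j
          = -(if tail e = v.1 ∧ head e = j.1 then w e else 0) := by
        intro e
        by_cases ht : tail e = v.1
        · by_cases hh : head e = j.1
          · simp [hc, hu, ht, hh, hvj]
          · simp [hc, hu, ht, hh, hvj]
        · simp [hc, hu, ht]
      rw [Finset.sum_congr rfl fun e _ => this e, Finset.sum_neg_distrib,
        Finset.sum_filter]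
  -- Step 2: expand the determinant multilinearly
  have hdet : ((dirLaplacian tail head w).submatrix
      (Subtype.val : Vr → V) (Subtype.val : Vr → V)).det
      = ∑ x : Vr → E, (∏ v : Vr, c v (x v)) * (arbMat head r x).det := by
    rw [hrow]
    have e1 : (Matrix.of (fun v : Vr => ∑ e : E, c v e • u v e)).det
        = Matrix.detRowAlternating.toMultilinearMap
            (fun v : Vr => ∑ e : E, c v e • u v e) := rfl
    rw [e1, MultilinearMap.map_sum]
    refine Finset.sum_congr rfl fun x _ => ?_
    have e2 := Matrix.detRowAlternating.toMultilinearMap.map_smul_univ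
      (fun v : Vr => c v (x v)) (fun v : Vr => u v (x v))
    rw [show (fun v : Vr => c v (x v) • u v (x v))
        = fun v : Vr => (fun v : Vr => c v (x v)) v • (fun v : Vr => u v (x v)) v
        from rfl] at *
    rw [e2, smul_eq_mul]
    rfl
  rw [hdet]
  -- Step 3: evaluate the elementary determinants
  have hterm : ∀ x : Vr → E,
      (∏ v : Vr, c v (x v)) * (arbMat head r x).det
      = if Q x then ∏ v : Vr, w (x v) else 0 := by
    intro x
    by_cases h1 : ∀ v : Vr, tail (x v) = v.1
    · have hcw : (∏ v : Vr, c v (x v)) = ∏ v : Vr, w (x v) :=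
        Finset.prod_congr rfl fun v _ => if_pos (h1 v)
      by_cases h2 : ∀ v : V, Relation.ReflTransGen
          (fun a b => ∃ h : a ≠ r, head (x ⟨a, h⟩) = b) v r
      · have hd : ∀ v : Vr, head (x v) ≠ v.1 := fun v => by
          rw [← h1 v]; exact (hloop (x v)).symm
        rw [hcw, arbMat_det_one head r x hd h2, mul_one, if_pos ⟨h1, h2⟩]
      · rw [arbMat_det_zero head r x h2, mul_zero,
          if_neg (fun hq => h2 hq.2)]
    · push_neg at h1
      obtain ⟨v, hv⟩ := h1
      rw [if_neg (fun hq => hv (hq.1 v))]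
      have : (∏ v' : Vr, c v' (x v')) = 0 :=
        Finset.prod_eq_zero (Finset.mem_univ v) (if_neg hv)
      rw [this, zero_mul]
  rw [Finset.sum_congr rfl fun x _ => hterm x]
  -- Step 4: reindex the sum over the subtype
  rw [← Finset.sum_filter]
  refine Finset.sum_subtype _ ?_ (fun x : Vr → E => ∏ v : Vr, w (x v))
  intro x
  simp only [Finset.mem_filter, Finset.mem_univ, true_and]
  exact Iff.rfl
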